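/- Let P and Q be finite p-groups in CP₂ of the same order p^n. If ψ(P) = ψ(Q), then |Ω_i(P)| = |Ω_i(Q)| for all natural numbers i. -/

import Mathlib

/-- Sum of the orders of the elements of a group. -/
noncomputable def psi (G : Type*) [Group G] : ℕ := ∑ᶠ x : G, orderOf x

/-- `Omega p G i` is the subgroup generated by all `x` with `x ^ p ^ i = 1`. -/
def Omega (p : ℕ) (G : Type*) [Group G] (i : ℕ) : Subgroup G :=
  Subgroup.closure {x : G | x ^ p ^ i = 1}

/-- The class `CP₂`: `o(xy) ≤ max (o x) (o y)` for all `x y`. -/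
def CP2 (G : Type*) [Group G] : Prop :=
  ∀ x y : G, orderOf (x * y) ≤ max (orderOf x) (orderOf y)

/- ### Arithmetic lemmas -/

lemma tail_ne {p : ℕ} (hp : 1 < p) {n i : ℕ} (hin : i < n) (e f : ℕ → ℕ)
    (he : Monotone e) (hf : Monotone f) (hef : e i < f i) :
    ∑ j ∈ Finset.Ico i n, p ^ (j + e j) ≠ ∑ j ∈ Finset.Ico i n, p ^ (j + f j) := by
  intro h
  have hM : p ^ (i + e i + 1) ∣ ∑ j ∈ Finset.Ico i n, p ^ (j + f j) :=
    Finset.dvd_sum fun j hj => pow_dvd_pow p (by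
      have h1 := (Finset.mem_Ico.mp hj).1
      have h2 := hf h1; omega)
  have hR : p ^ (i + e i + 1) ∣ ∑ j ∈ Finset.Ico (i + 1) n, p ^ (j + e j) :=
    Finset.dvd_sum fun j hj => pow_dvd_pow p (by
      have h1 := (Finset.mem_Ico.mp hj).1
      have h2 := he (show i ≤ j by omega); omega)
  rw [Finset.sum_eq_sum_Ico_succ_bot hin] at h
  rw [← h] at hM
  have hdvd : p ^ (i + e i + 1) ∣ p ^ (i + e i) := by
    have := Nat.dvd_sub hM hR
    simpa using this
  have h1 := Nat.le_of_dvd (pow_pos (by omega) _) hdvd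
  have h2 := Nat.pow_lt_pow_succ hp (n := i + e i)
  omega

lemma pow_sum_cancel {p : ℕ} (hp : 1 < p) (n : ℕ) (e f : ℕ → ℕ)
    (he : Monotone e) (hf : Monotone f)
    (hsum : ∑ i ∈ Finset.range n, p ^ (i + e i) = ∑ i ∈ Finset.range n, p ^ (i + f i)) :
    ∀ i < n, e i = f i := by
  intro i
  induction i using Nat.strong_induction_on with
  | _ i ih =>
    intro hin
    by_contra hne
    have hpre : ∑ j ∈ Finset.range i, p ^ (j + e j) = ∑ j ∈ Finset.range i, p ^ (j + f j) :=
      Finset.sum_congr rfl fun j hj => by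
        rw [ih j (Finset.mem_range.mp hj) (lt_trans (Finset.mem_range.mp hj) hin)]
    have hsplitE : ∑ j ∈ Finset.range i, p ^ (j + e j) + ∑ j ∈ Finset.Ico i n, p ^ (j + e j)
        = ∑ j ∈ Finset.range n, p ^ (j + e j) := by
      rw [Finset.range_eq_Ico, Finset.range_eq_Ico]
      exact Finset.sum_Ico_consecutive _ (Nat.zero_le i) (le_of_lt hin)
    have hsplitF : ∑ j ∈ Finset.range i, p ^ (j + f j) + ∑ j ∈ Finset.Ico i n, p ^ (j + f j)
        = ∑ j ∈ Finset.range n, p ^ (j + f j) := by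
      rw [Finset.range_eq_Ico, Finset.range_eq_Ico]
      exact Finset.sum_Ico_consecutive _ (Nat.zero_le i) (le_of_lt hin)
    have htail : ∑ j ∈ Finset.Ico i n, p ^ (j + e j) = ∑ j ∈ Finset.Ico i n, p ^ (j + f j) := by
      omega
    rcases lt_or_gt_of_ne hne with hlt | hgt
    · exact tail_ne hp hin e f he hf hlt htail
    · exact tail_ne hp hin f e hf he hgt htail.symm

/- ### Group-theoretic lemmas -/

section Grp

variable {p : ℕ} {G : Type*} [Group G] [Finite G]

/-- In a `CP2` p-group, the set of `p^i`-th roots of 1 is a subgroup. -/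
def omegaSubgroup (hp : p.Prime) (hG : IsPGroup p G) (hcp : CP2 G) (i : ℕ) : Subgroup G where
  carrier := {x : G | x ^ p ^ i = 1}
  one_mem' := one_pow _
  inv_mem' := by intro x hx; simp only [Set.mem_setOf_eq, inv_pow] at *; rw [hx, inv_one]
  mul_mem' := by
    intro x y hx hy
    simp only [Set.mem_setOf_eq] at *
    have hxd : orderOf x ≤ p ^ i :=
      Nat.le_of_dvd (pow_pos hp.pos i) (orderOf_dvd_of_pow_eq_one hx)
    have hyd : orderOf y ≤ p ^ i :=
      Nat.le_of_dvd (pow_pos hp.pos i) (orderOf_dvd_of_pow_eq_one hy)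
    have hle : orderOf (x * y) ≤ p ^ i := le_trans (hcp x y) (by omega)
    have : Fact p.Prime := ⟨hp⟩
    obtain ⟨k, hk⟩ := (IsPGroup.iff_orderOf.mp hG) (x * y)
    have hki : k ≤ i := by
      by_contra hki
      have := pow_lt_pow_right₀ hp.one_lt (show i < k by omega)
      omega
    rw [← orderOf_dvd_iff_pow_eq_one, hk]
    exact pow_dvd_pow p hki

lemma omega_eq (hp : p.Prime) (hG : IsPGroup p G) (hcp : CP2 G) (i : ℕ) :
    Omega p G i = omegaSubgroup hp hG hcp i := by
  apply le_antisymm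
  · rw [Omega]
    exact (Subgroup.closure_le _).mpr fun x hx => hx
  · exact fun x hx => Subgroup.subset_closure hx

lemma card_omega (hp : p.Prime) (hG : IsPGroup p G) (hcp : CP2 G) (i : ℕ)
    [Fintype G] [DecidableEq G] :
    Nat.card (Omega p G i) = (Finset.univ.filter (fun x : G => x ^ p ^ i = 1)).card := by
  rw [omega_eq hp hG hcp i]
  have h1 : Nat.card (omegaSubgroup hp hG hcp i) = Nat.card {x : G // x ^ p ^ i = 1} :=
    Nat.card_congr (Equiv.subtypeEquivRight fun x => Iff.rfl)
  rw [h1, Nat.card_eq_fintype_card, Fintype.card_subtype]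

end Grp

/-- per-element telescoping identity -/
lemma order_plus_tail {p n k : ℕ} (hp : 1 < p) (hk : k ≤ n) :
    p ^ k + ∑ i ∈ Finset.range n, (if k ≤ i then p ^ (i + 1) - p ^ i else 0) = p ^ n := by
  induction n, hk using Nat.le_induction with
  | base =>
    have h0 : ∑ i ∈ Finset.range k, (if k ≤ i then p ^ (i + 1) - p ^ i else 0) = 0 :=
      Finset.sum_eq_zero fun i hi => if_neg (by
        have := Finset.mem_range.mp hi; omega)
    omega
  | succ n hn ihn =>
    rw [Finset.sum_range_succ, if_pos hn, ← Nat.add_assoc, ihn]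
    have := Nat.pow_lt_pow_succ hp (n := n)
    omega

/-- The master counting identity. -/
lemma psi_identity {p n : ℕ} (hp : p.Prime) (G : Type*) [Group G] [Fintype G] [DecidableEq G]
    (hG : IsPGroup p G) (hcard : Nat.card G = p ^ n) :
    psi G + ∑ i ∈ Finset.range n,
      (p ^ (i + 1) - p ^ i) * (Finset.univ.filter (fun x : G => x ^ p ^ i = 1)).card
    = p ^ n * p ^ n := by
  have : Fact p.Prime := ⟨hp⟩
  have hswap : ∑ i ∈ Finset.range n,
      (p ^ (i + 1) - p ^ i) * (Finset.univ.filter (fun x : G => x ^ p ^ i = 1)).card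
      = ∑ x : G, ∑ i ∈ Finset.range n, (if x ^ p ^ i = 1 then p ^ (i + 1) - p ^ i else 0) := by
    rw [Finset.sum_comm]
    refine Finset.sum_congr rfl fun i _ => ?_
    rw [mul_comm, ← smul_eq_mul, ← Finset.sum_const, Finset.sum_filter]
  have hpsi : psi G = ∑ x : G, orderOf x := finsum_eq_sum_of_fintype _
  have hcard' : Fintype.card G = p ^ n := by rw [← Nat.card_eq_fintype_card, hcard]
  rw [hpsi, hswap, ← Finset.sum_add_distrib]
  calc ∑ x : G, (orderOf x + ∑ i ∈ Finset.range n,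
        (if x ^ p ^ i = 1 then p ^ (i + 1) - p ^ i else 0))
      = ∑ _x : G, p ^ n := by
        refine Finset.sum_congr rfl fun x _ => ?_
        obtain ⟨k, hkn, hk⟩ := (Nat.dvd_prime_pow hp).mp
          (hcard ▸ orderOf_dvd_natCard x)
        have hiff : ∀ i : ℕ, (x ^ p ^ i = 1) ↔ (k ≤ i) := fun i => by
          rw [← orderOf_dvd_iff_pow_eq_one, hk, Nat.pow_dvd_pow_iff_le_right hp.one_lt]
        have h2 : ∑ i ∈ Finset.range n, (if x ^ p ^ i = 1 then p ^ (i + 1) - p ^ i else 0)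
            = ∑ i ∈ Finset.range n, (if k ≤ i then p ^ (i + 1) - p ^ i else 0) :=
          Finset.sum_congr rfl fun i _ => by rw [if_congr (hiff i) rfl rfl]
        rw [h2, hk]
        exact order_plus_tail hp.one_lt hkn
    _ = p ^ n * p ^ n := by
        rw [Finset.sum_const, Finset.card_univ, hcard', smul_eq_mul]

lemma omega_le_omega (p : ℕ) (G : Type*) [Group G] {i j : ℕ} (hij : i ≤ j) :
    Omega p G i ≤ Omega p G j :=
  Subgroup.closure_mono fun x hx => by
    simp only [Set.mem_setOf_eq] at *
    have h : p ^ j = p ^ i * p ^ (j - i) := by rw [← pow_add]; congr 1; omega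
    rw [h, pow_mul, hx, one_pow]

lemma psi_identity' {p n : ℕ} (hp : p.Prime) (G : Type*) [Group G] [Finite G]
    (hG : IsPGroup p G) (hcp : CP2 G) (hcard : Nat.card G = p ^ n) :
    psi G + ∑ i ∈ Finset.range n,
      (p ^ (i + 1) - p ^ i) * Nat.card (Omega p G i) = p ^ n * p ^ n := by
  classical
  letI := Fintype.ofFinite G
  rw [Finset.sum_congr rfl (fun i _ => by rw [card_omega hp hG hcp i])]
  exact psi_identity hp G hG hcard

theorem stmt_8 {p n : ℕ} (hp : p.Prime) (P Q : Type*) [Group P] [Finite P]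
    [Group Q] [Finite Q] (hPp : IsPGroup p P) (hQp : IsPGroup p Q)
    (hcpP : CP2 P) (hcpQ : CP2 Q)
    (hcardP : Nat.card P = p ^ n) (hcardQ : Nat.card Q = p ^ n)
    (hpsi : psi P = psi Q) :
    ∀ i : ℕ, Nat.card (Omega p P i) = Nat.card (Omega p Q i) := by
  classical
  have hfac : ∀ k : ℕ, ((p ^ k : ℕ).factorization) p = k := fun k => by
    simp [Nat.Prime.factorization_pow hp]
  set eP : ℕ → ℕ := fun j => (Nat.card (Omega p P j)).factorization p with heP
  set eQ : ℕ → ℕ := fun j => (Nat.card (Omega p Q j)).factorization p with heQ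
  have hEP : ∀ j, Nat.card (Omega p P j) = p ^ eP j := fun j => by
    obtain ⟨k, _, hk⟩ := (Nat.dvd_prime_pow hp).mp
      (hcardP ▸ Subgroup.card_subgroup_dvd_card (Omega p P j))
    rw [heP]; simp only; rw [hk, hfac]
  have hEQ : ∀ j, Nat.card (Omega p Q j) = p ^ eQ j := fun j => by
    obtain ⟨k, _, hk⟩ := (Nat.dvd_prime_pow hp).mp
      (hcardQ ▸ Subgroup.card_subgroup_dvd_card (Omega p Q j))
    rw [heQ]; simp only; rw [hk, hfac]
  have hmonoP : Monotone eP := monotone_nat_of_le_succ fun j => by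
    have h := Subgroup.card_le_of_le (omega_le_omega p P (Nat.le_succ j))
    rw [hEP j, hEP (j + 1)] at h
    exact (Nat.pow_le_pow_iff_right hp.one_lt).mp h
  have hmonoQ : Monotone eQ := monotone_nat_of_le_succ fun j => by
    have h := Subgroup.card_le_of_le (omega_le_omega p Q (Nat.le_succ j))
    rw [hEQ j, hEQ (j + 1)] at h
    exact (Nat.pow_le_pow_iff_right hp.one_lt).mp h
  have hidP := psi_identity' hp P hPp hcpP hcardP
  have hidQ := psi_identity' hp Q hQp hcpQ hcardQ
  have transform : ∀ e : ℕ → ℕ, ∑ i ∈ Finset.range n, (p ^ (i + 1) - p ^ i) * p ^ e i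
      = (p - 1) * ∑ i ∈ Finset.range n, p ^ (i + e i) := fun e => by
    rw [Finset.mul_sum]
    refine Finset.sum_congr rfl fun i _ => ?_
    have hw : p ^ (i + 1) - p ^ i = (p - 1) * p ^ i := by
      rw [Nat.sub_mul, one_mul, ← pow_succ']
    rw [hw, pow_add, mul_assoc]
  have hAP : ∑ i ∈ Finset.range n, (p ^ (i + 1) - p ^ i) * Nat.card (Omega p P i)
      = (p - 1) * ∑ i ∈ Finset.range n, p ^ (i + eP i) := by
    rw [← transform eP]
    exact Finset.sum_congr rfl fun i _ => by rw [hEP i]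
  have hAQ : ∑ i ∈ Finset.range n, (p ^ (i + 1) - p ^ i) * Nat.card (Omega p Q i)
      = (p - 1) * ∑ i ∈ Finset.range n, p ^ (i + eQ i) := by
    rw [← transform eQ]
    exact Finset.sum_congr rfl fun i _ => by rw [hEQ i]
  rw [hAP] at hidP
  rw [hAQ] at hidQ
  have hcancel : ∑ i ∈ Finset.range n, p ^ (i + eP i)
      = ∑ i ∈ Finset.range n, p ^ (i + eQ i) := by
    refine Nat.eq_of_mul_eq_mul_left (show 0 < p - 1 by have := hp.two_le; omega) ?_
    omega
  have key := pow_sum_cancel hp.one_lt n eP eQ hmonoP hmonoQ hcancel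
  intro i
  rcases lt_or_ge i n with hin | hin
  · rw [hEP i, hEQ i, key i hin]
  · have htopP : Omega p P i = ⊤ := by
      rw [eq_top_iff]
      intro x _
      apply Subgroup.subset_closure
      show x ^ p ^ i = 1
      rw [← orderOf_dvd_iff_pow_eq_one]
      exact dvd_trans (hcardP ▸ orderOf_dvd_natCard x) (pow_dvd_pow p hin)
    have htopQ : Omega p Q i = ⊤ := by
      rw [eq_top_iff]
      intro x _
      apply Subgroup.subset_closure
      show x ^ p ^ i = 1
      rw [← orderOf_dvd_iff_pow_eq_one]
      exact dvd_trans (hcardQ ▸ orderOf_dvd_natCard x) (pow_dvd_pow p hin)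
    rw [htopP, htopQ, Subgroup.card_top, Subgroup.card_top, hcardP, hcardQ]
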